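/- arXiv:2206.00908 — 2 statements merged into one kernel-verified Lean document; each statement's English description precedes it below -/
import Mathlib

section
/- Let A be a nonzero d×d real matrix partitioned into blocks with A₁₁ k×k, and let Y₀ be a (d−k)×k real matrix. Define Δ₀ = W( ‖A‖ / ( ‖[I_k 0]A‖ · ‖[I_k; Y₀]‖ ) ) / ‖A‖, where W is the principal Lambert W function on [0,∞). Then for every s with 0 < s ≤ Δ₀, the k×k matrix U(s) = [I_k 0] e^{As} [I_k; Y₀] is invertible. -/
open Matrix
open scoped Matrix.Norms.L2Operator

/-- Let `A ≠ 0` be a `(k+m) × (k+m)` real matrix and `Y₀` an `m × k` real matrix. With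
`Δ₀ = W(‖A‖ / (‖[I 0] A‖ ‖[I; Y₀]‖)) / ‖A‖` (principal Lambert `W`), the matrix
`U(s) = [I 0] e^{As} [I; Y₀]` is invertible for every `0 < s ≤ Δ₀`. -/
theorem stmt_10 (k m : ℕ) (A : Matrix (Fin k ⊕ Fin m) (Fin k ⊕ Fin m) ℝ) (hA : A ≠ 0)
    (Y₀ : Matrix (Fin m) (Fin k) ℝ)
    (W : ℝ → ℝ) (hW : ∀ y ∈ Set.Ici (0 : ℝ), 0 ≤ W y ∧ W y * Real.exp (W y) = y) :
    ∀ s : ℝ, 0 < s →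
      s ≤ W (‖A‖ / (‖fromCols (1 : Matrix (Fin k) (Fin k) ℝ)
              (0 : Matrix (Fin k) (Fin m) ℝ) * A‖ *
            ‖fromRows (1 : Matrix (Fin k) (Fin k) ℝ) Y₀‖)) / ‖A‖ →
      IsUnit (fromCols (1 : Matrix (Fin k) (Fin k) ℝ) (0 : Matrix (Fin k) (Fin m) ℝ) *
        NormedSpace.exp (s • A) * fromRows (1 : Matrix (Fin k) (Fin k) ℝ) Y₀) := by
  intro s hs hsle
  rcases Nat.eq_zero_or_pos k with hk | hk
  · subst hk
    have h1 : (fromCols (1 : Matrix (Fin 0) (Fin 0) ℝ) (0 : Matrix (Fin 0) (Fin m) ℝ) *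
        NormedSpace.exp (s • A) * fromRows (1 : Matrix (Fin 0) (Fin 0) ℝ) Y₀) = 1 := by
      ext i j
      exact i.elim0
    rw [h1]; exact isUnit_one
  haveI : Nonempty (Fin k ⊕ Fin m) := ⟨Sum.inl ⟨0, hk⟩⟩
  haveI : Nontrivial (Matrix (Fin k ⊕ Fin m) (Fin k ⊕ Fin m) ℝ) := by
    refine ⟨0, 1, fun h => ?_⟩
    have := congrFun (congrFun h (Sum.inl ⟨0, hk⟩)) (Sum.inl ⟨0, hk⟩)
    simp [Matrix.one_apply] at this
  set Bc : Matrix (Fin k) (Fin k ⊕ Fin m) ℝ :=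
    fromCols (1 : Matrix (Fin k) (Fin k) ℝ) (0 : Matrix (Fin k) (Fin m) ℝ) with hBc
  set C : Matrix (Fin k ⊕ Fin m) (Fin k) ℝ :=
    fromRows (1 : Matrix (Fin k) (Fin k) ℝ) Y₀ with hCdef
  set B : Matrix (Fin k) (Fin k ⊕ Fin m) ℝ := Bc * A with hBdef
  set M : Matrix (Fin k ⊕ Fin m) (Fin k ⊕ Fin m) ℝ := s • A with hMdef
  set g : ℕ → Matrix (Fin k ⊕ Fin m) (Fin k ⊕ Fin m) ℝ :=
    fun n => ((((n + 1).factorial) : ℝ))⁻¹ • M ^ n with hgdef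
  set x : ℝ := s * ‖A‖ with hxdef
  have hAnorm : 0 < ‖A‖ := by rwa [norm_pos_iff]
  have hxpos : 0 < x := mul_pos hs hAnorm
  have hMnorm : ‖M‖ = x := by
    rw [hMdef, norm_smul, Real.norm_of_nonneg hs.le]
  have hpow : ∀ n : ℕ, ‖M ^ n‖ ≤ ‖M‖ ^ n := by
    intro n
    cases n with
    | zero => simp [norm_one]
    | succ n => exact norm_pow_le' M n.succ_pos
  have hgle : ∀ n : ℕ, ‖g n‖ ≤ x ^ n / ((n + 1).factorial) := by
    intro n
    rw [hgdef, norm_smul, Real.norm_eq_abs, abs_of_nonneg (by positivity), div_eq_inv_mul]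
    gcongr
    calc ‖M ^ n‖ ≤ ‖M‖ ^ n := hpow n
      _ = x ^ n := by rw [hMnorm]
  have hhsum : Summable (fun n : ℕ => x ^ n / ((n + 1).factorial)) := by
    refine Summable.of_nonneg_of_le (fun n => by positivity) (fun n => ?_)
      (Real.summable_pow_div_factorial x)
    gcongr
    all_goals first | exact hxpos.le | exact Nat.le_succ n | positivity
  have hgnormsum : Summable (fun n => ‖g n‖) :=
    Summable.of_nonneg_of_le (fun n => norm_nonneg _) hgle hhsum
  have hgsum : Summable g := hgnormsum.of_norm
  set R : Matrix (Fin k ⊕ Fin m) (Fin k ⊕ Fin m) ℝ := ∑' n, g n with hRdef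
  have hexp : NormedSpace.exp M = 1 + M * R := by
    rw [NormedSpace.exp_eq_tsum (𝕂 := ℝ)]
    show (∑' n : ℕ, ((n.factorial : ℝ))⁻¹ • M ^ n) = 1 + M * R
    rw [Summable.tsum_eq_zero_add (NormedSpace.expSeries_summable' (𝕂 := ℝ) M)]
    have h0 : (((Nat.factorial 0 : ℝ)))⁻¹ • M ^ 0 = 1 := by simp
    rw [h0]
    congr 1
    have heq : ∀ n : ℕ, ((((n + 1).factorial) : ℝ))⁻¹ • M ^ (n + 1) = M * g n := by
      intro n
      rw [hgdef, pow_succ', Matrix.mul_smul]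
    simp_rw [heq]
    rw [hgsum.tsum_mul_left]
  have hBcC : Bc * C = 1 := by
    rw [hBc, hCdef, fromCols_mul_fromRows]
    simp
  have hU : Bc * NormedSpace.exp M * C = 1 + s • (B * R * C) := by
    rw [hexp, Matrix.mul_add, Matrix.mul_one, Matrix.add_mul, hBcC]
    congr 1
    rw [hMdef, hBdef]
    simp only [Matrix.smul_mul, Matrix.mul_smul, Matrix.mul_assoc]
  by_cases hB0 : B = 0
  · rw [hU, hB0]
    simp
  · have hBpos : 0 < ‖B‖ := by rwa [norm_pos_iff]
    have hCpos : 0 < ‖C‖ := by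
      rw [norm_pos_iff]
      intro h
      have := congrFun (congrFun h (Sum.inl ⟨0, hk⟩)) ⟨0, hk⟩
      simp [hCdef, Matrix.one_apply] at this
    set S : ℝ := ∑' n : ℕ, x ^ n / ((n + 1).factorial) with hSdef
    have hRle : ‖R‖ ≤ S := by
      refine (norm_tsum_le_tsum_norm hgnormsum).trans ?_
      exact Summable.tsum_le_tsum hgle hgnormsum hhsum
    have hSlt : S < Real.exp x := by
      rw [Real.exp_eq_exp_ℝ, NormedSpace.exp_eq_tsum_div]
      refine Summable.tsum_lt_tsum_of_nonneg (i := 1) (fun n => by positivity) (fun n => ?_) ?_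
        (Real.summable_pow_div_factorial x)
      · gcongr
        all_goals first | exact hxpos.le | exact Nat.le_succ n | positivity
      · norm_num [Nat.factorial]
        linarith
    -- the key inequality from the Lambert W hypothesis
    have hkey : s * ‖B‖ * ‖C‖ * Real.exp x ≤ 1 := by
      set y : ℝ := ‖A‖ / (‖B‖ * ‖C‖) with hydef
      obtain ⟨hW0, hWid⟩ := hW y (Set.mem_Ici.mpr (by positivity))
      have hxW : x ≤ W y := by
        rw [hxdef]
        calc s * ‖A‖ ≤ W y / ‖A‖ * ‖A‖ := by gcongr
          _ = W y := div_mul_cancel₀ _ hAnorm.ne'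
      have hmono : x * Real.exp x ≤ W y * Real.exp (W y) :=
        mul_le_mul hxW (Real.exp_le_exp.2 hxW) (Real.exp_pos x).le hW0
      have h2 : x * Real.exp x * (‖B‖ * ‖C‖) ≤ ‖A‖ := by
        rw [hWid] at hmono
        exact (le_div_iff₀ (by positivity)).mp hmono
      rw [← mul_le_mul_iff_of_pos_right hAnorm]
      calc s * ‖B‖ * ‖C‖ * Real.exp x * ‖A‖
          = x * Real.exp x * (‖B‖ * ‖C‖) := by rw [hxdef]; ring
        _ ≤ ‖A‖ := h2
        _ = 1 * ‖A‖ := (one_mul _).symm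
    have hnorm : ‖1 - Bc * NormedSpace.exp M * C‖ < 1 := by
      rw [hU]
      have : (1 : Matrix (Fin k) (Fin k) ℝ) - (1 + s • (B * R * C)) = -(s • (B * R * C)) := by
        abel
      rw [this, norm_neg, norm_smul, Real.norm_of_nonneg hs.le]
      have hBRC : ‖B * R * C‖ ≤ ‖B‖ * ‖R‖ * ‖C‖ := by
        calc ‖B * R * C‖ ≤ ‖B * R‖ * ‖C‖ := Matrix.l2_opNorm_mul _ _
          _ ≤ ‖B‖ * ‖R‖ * ‖C‖ := by gcongr; exact Matrix.l2_opNorm_mul _ _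
      calc s * ‖B * R * C‖ ≤ s * (‖B‖ * ‖R‖ * ‖C‖) := by gcongr
        _ ≤ s * (‖B‖ * S * ‖C‖) := by gcongr
        _ < s * (‖B‖ * Real.exp x * ‖C‖) := by gcongr
        _ = s * ‖B‖ * ‖C‖ * Real.exp x := by ring
        _ ≤ 1 := hkey
    have := (Units.oneSub (1 - Bc * NormedSpace.exp M * C) hnorm).isUnit
    simpa using this
end

section
/- Let A be a d×d real matrix defining a Riccati differential equation with escape time function t_A, and suppose the maximal solution Y(·; Y₀) from initial state Y₀ has finite escape time t_A(Y₀) < ∞. Define Δ(t) = W( ‖A‖ / ( ‖[I 0]A‖·‖[I; Y(t;Y₀)]‖ ) )/‖A‖ for t ∈ [0, t_A(Y₀)), and the sequence t₀ = 0, t_{n+1} = t_n + Δ(t_n). Then the sequence {t_n} is strictly increasing, bounded above by t_A(Y₀), and converges to t_A(Y₀). -/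
open Matrix Filter
open scoped Matrix.Norms.L2Operator Topology

/-- `U(t) = [I 0] e^{At} [I; Y₀]`, the upper block of the linearized Riccati flow. -/
noncomputable def stmt11U (k m : ℕ) (A : Matrix (Fin k ⊕ Fin m) (Fin k ⊕ Fin m) ℝ)
    (Y₀ : Matrix (Fin m) (Fin k) ℝ) (t : ℝ) : Matrix (Fin k) (Fin k) ℝ :=
  toRows₁ (NormedSpace.exp (t • A) * fromRows (1 : Matrix (Fin k) (Fin k) ℝ) Y₀)

/-- `Y(t; Y₀) = V(t) U(t)⁻¹`, the solution of the Riccati differential equation. -/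
noncomputable def stmt11Y (k m : ℕ) (A : Matrix (Fin k ⊕ Fin m) (Fin k ⊕ Fin m) ℝ)
    (Y₀ : Matrix (Fin m) (Fin k) ℝ) (t : ℝ) : Matrix (Fin m) (Fin k) ℝ :=
  toRows₂ (NormedSpace.exp (t • A) * fromRows (1 : Matrix (Fin k) (Fin k) ℝ) Y₀) *
    (stmt11U k m A Y₀ t)⁻¹

/-- `Δ(t) = W(‖A‖ / (‖[I 0] A‖ ‖[I; Y(t;Y₀)]‖)) / ‖A‖` (spectral norms). -/
noncomputable def stmt11Delta (k m : ℕ) (A : Matrix (Fin k ⊕ Fin m) (Fin k ⊕ Fin m) ℝ)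
    (Y₀ : Matrix (Fin m) (Fin k) ℝ) (W : ℝ → ℝ) (t : ℝ) : ℝ :=
  W (‖A‖ / (‖fromCols (1 : Matrix (Fin k) (Fin k) ℝ) (0 : Matrix (Fin k) (Fin m) ℝ) * A‖ *
      ‖fromRows (1 : Matrix (Fin k) (Fin k) ℝ) (stmt11Y k m A Y₀ t)‖)) / ‖A‖


section Helpers
set_option linter.unusedSectionVars false

variable {k m : ℕ} {n : Type*} [Fintype n]

lemma st11_C_mul (X : Matrix (Fin k ⊕ Fin m) n ℝ) :
    fromCols (1 : Matrix (Fin k) (Fin k) ℝ) (0 : Matrix (Fin k) (Fin m) ℝ) * X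
      = toRows₁ X := by
  conv_lhs => rw [← fromRows_toRows X]
  rw [fromCols_mul_fromRows, Matrix.one_mul, Matrix.zero_mul, add_zero]

lemma st11_mul_pow_norm (A : Matrix (Fin k ⊕ Fin m) (Fin k ⊕ Fin m) ℝ)
    (X : Matrix (Fin k) (Fin k ⊕ Fin m) ℝ) :
    ∀ nn : ℕ, ‖X * A ^ nn‖ ≤ ‖X‖ * ‖A‖ ^ nn := by
  intro nn
  induction nn with
  | zero => simp
  | succ j ih =>
      rw [pow_succ, ← Matrix.mul_assoc, pow_succ]
      calc ‖X * A ^ j * A‖ ≤ ‖X * A ^ j‖ * ‖A‖ := Matrix.l2_opNorm_mul _ _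
        _ ≤ ‖X‖ * ‖A‖ ^ j * ‖A‖ :=
              mul_le_mul_of_nonneg_right ih (norm_nonneg _)
        _ = ‖X‖ * (‖A‖ ^ j * ‖A‖) := by ring

set_option linter.unusedSectionVars false

lemma st11_key (A : Matrix (Fin k ⊕ Fin m) (Fin k ⊕ Fin m) ℝ)
    (hCA : 0 < ‖fromCols (1 : Matrix (Fin k) (Fin k) ℝ) (0 : Matrix (Fin k) (Fin m) ℝ) * A‖) {s : ℝ} (hs : 0 < s) :
    ‖fromCols (1 : Matrix (Fin k) (Fin k) ℝ) (0 : Matrix (Fin k) (Fin m) ℝ) * (NormedSpace.exp (s • A) - 1)‖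
      < ‖fromCols (1 : Matrix (Fin k) (Fin k) ℝ) (0 : Matrix (Fin k) (Fin m) ℝ) * A‖ * s * Real.exp (s * ‖A‖) := by
  classical
  set C : Matrix (Fin k) (Fin k ⊕ Fin m) ℝ := fromCols 1 0 with hC
  have hApos : 0 < ‖A‖ := by
    by_contra h
    push_neg at h
    have : A = 0 := by
      have := le_antisymm h (norm_nonneg A); rwa [norm_eq_zero] at this
    rw [this, Matrix.mul_zero, norm_zero] at hCA
    exact lt_irrefl _ hCA
  -- the exponential series
  set f : ℕ → Matrix (Fin k ⊕ Fin m) (Fin k ⊕ Fin m) ℝ :=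
    fun nn => ((Nat.factorial nn : ℝ))⁻¹ • (s • A) ^ nn with hf
  have hsum : HasSum f (NormedSpace.exp (s • A)) := by
    have h1 := NormedSpace.expSeries_summable' (𝕂 := ℝ) (s • A)
    rw [hf, NormedSpace.exp_eq_tsum ℝ]
    exact h1.hasSum
  have hshift : HasSum (fun nn => f (nn + 1)) (NormedSpace.exp (s • A) - 1) := by
    have h0 : f 0 = 1 := by simp [hf]
    rw [← hasSum_nat_add_iff' 1] at hsum
    simpa [h0] using hsum
  -- multiply by C on the left (continuous linear)
  have hmulcont : Continuous (fun X : Matrix (Fin k ⊕ Fin m) (Fin k ⊕ Fin m) ℝ => C * X) :=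
    continuous_const.matrix_mul continuous_id
  have hCsum : HasSum (fun nn => C * f (nn + 1)) (C * (NormedSpace.exp (s • A) - 1)) := by
    let lmap : Matrix (Fin k ⊕ Fin m) (Fin k ⊕ Fin m) ℝ →ₗ[ℝ] Matrix (Fin k) (Fin k ⊕ Fin m) ℝ :=
      { toFun := fun X => C * X
        map_add' := fun X Y => Matrix.mul_add C X Y
        map_smul' := fun c X => (Matrix.mul_smul C c X) }
    have hc : Continuous ⇑lmap := hmulcont
    exact hshift.map lmap hc
  -- termwise bounds
  set b : ℕ → ℝ := fun nn => ‖C * A‖ * ‖A‖ ^ nn * (s ^ (nn + 1) * ((Nat.factorial (nn+1) : ℕ) : ℝ)⁻¹) with hb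
  set c : ℕ → ℝ := fun nn => (‖C * A‖ * s) * ((s * ‖A‖) ^ nn / (Nat.factorial nn)) with hcdef
  have hterm : ∀ nn, ‖C * f (nn + 1)‖ ≤ b nn := by
    intro nn
    have : C * f (nn + 1) = (((Nat.factorial (nn+1) : ℕ) : ℝ)⁻¹ * s ^ (nn + 1)) • ((C * A) * A ^ nn) := by
      simp only [hf]
      rw [smul_pow, Matrix.mul_smul, Matrix.mul_smul, smul_smul]
      congr 1
      rw [pow_succ']
      rw [← Matrix.mul_assoc]
    rw [this, norm_smul]
    have h1 : ‖(C * A) * A ^ nn‖ ≤ ‖C * A‖ * ‖A‖ ^ nn := st11_mul_pow_norm A (C * A) nn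
    have h2 : |((Nat.factorial (nn+1) : ℕ) : ℝ)⁻¹ * s ^ (nn + 1)| = s ^ (nn + 1) * ((Nat.factorial (nn+1) : ℕ) : ℝ)⁻¹ := by
      rw [abs_of_nonneg (by positivity)]; ring
    rw [Real.norm_eq_abs, h2, hb]
    calc s ^ (nn + 1) * ((Nat.factorial (nn+1) : ℕ) : ℝ)⁻¹ * ‖C * A * A ^ nn‖
        ≤ s ^ (nn + 1) * ((Nat.factorial (nn+1) : ℕ) : ℝ)⁻¹ * (‖C * A‖ * ‖A‖ ^ nn) := by
          exact mul_le_mul_of_nonneg_left h1 (by positivity)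
      _ = ‖C * A‖ * ‖A‖ ^ nn * (s ^ (nn + 1) * ((Nat.factorial (nn+1) : ℕ) : ℝ)⁻¹) := by ring
  have hbc : ∀ nn, b nn ≤ c nn := by
    intro nn
    rw [hb, hcdef]
    have h1 : ((Nat.factorial (nn+1) : ℕ) : ℝ)⁻¹ ≤ ((Nat.factorial nn : ℕ) : ℝ)⁻¹ := by
      apply inv_anti₀ (by positivity)
      exact_mod_cast Nat.factorial_le (Nat.le_succ nn)
    calc ‖C * A‖ * ‖A‖ ^ nn * (s ^ (nn + 1) * ((Nat.factorial (nn+1) : ℕ) : ℝ)⁻¹)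
        ≤ ‖C * A‖ * ‖A‖ ^ nn * (s ^ (nn + 1) * ((Nat.factorial nn : ℕ) : ℝ)⁻¹) := by
          apply mul_le_mul_of_nonneg_left _ (by positivity)
          exact mul_le_mul_of_nonneg_left h1 (by positivity)
      _ = (‖C * A‖ * s) * ((s * ‖A‖) ^ nn / (Nat.factorial nn)) := by
          rw [mul_pow, pow_succ]; field_simp
  have hcsum : Summable c := ((Real.summable_pow_div_factorial (s * ‖A‖)).mul_left _)
  have hnormsum : Summable fun nn => ‖C * f (nn + 1)‖ :=
    Summable.of_nonneg_of_le (fun _ => norm_nonneg _)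
      (fun nn => le_trans (hterm nn) (hbc nn)) hcsum
  have hb1c1 : ‖C * f (1 + 1)‖ < c 1 := by
    refine lt_of_le_of_lt (hterm 1) ?_
    rw [hb, hcdef]
    have : ((Nat.factorial 2 : ℕ) : ℝ)⁻¹ = 2⁻¹ := by norm_num [Nat.factorial]
    simp only [this, pow_one, Nat.factorial_one]
    push_cast
    have hpos : 0 < ‖C * A‖ * ‖A‖ * (s * s) := by positivity
    nlinarith [hpos]
  have hlt : ∑' nn, ‖C * f (nn + 1)‖ < ∑' nn, c nn :=
    Summable.tsum_lt_tsum (fun nn => le_trans (hterm nn) (hbc nn)) hb1c1 hnormsum hcsum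
  have hcsum_val : ∑' nn, c nn = ‖C * A‖ * s * Real.exp (s * ‖A‖) := by
    rw [hcdef, tsum_mul_left]
    rw [Real.exp_eq_exp_ℝ, NormedSpace.exp_eq_tsum_div]
  calc ‖C * (NormedSpace.exp (s • A) - 1)‖
      = ‖∑' nn, C * f (nn + 1)‖ := by rw [hCsum.tsum_eq]
    _ ≤ ∑' nn, ‖C * f (nn + 1)‖ := norm_tsum_le_tsum_norm hnormsum
    _ < ∑' nn, c nn := hlt
    _ = ‖C * A‖ * s * Real.exp (s * ‖A‖) := hcsum_val

lemma st11_R_pos {k m : ℕ} [Nonempty (Fin k)] (Y : Matrix (Fin m) (Fin k) ℝ) :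
    0 < ‖fromRows (1 : Matrix (Fin k) (Fin k) ℝ) Y‖ := by
  rw [norm_pos_iff]
  intro h
  obtain ⟨i⟩ := (inferInstance : Nonempty (Fin k))
  have := congrFun (congrFun h (Sum.inl i)) i
  rw [fromRows_apply_inl] at this
  simp [Matrix.one_apply_eq] at this

lemma st11_step {k m : ℕ} (A : Matrix (Fin k ⊕ Fin m) (Fin k ⊕ Fin m) ℝ)
    (Y₀ : Matrix (Fin m) (Fin k) ℝ) (W : ℝ → ℝ)
    (hW : ∀ y ∈ Set.Ici (0:ℝ), 0 ≤ W y ∧ W y * Real.exp (W y) = y)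
    (hApos : 0 < ‖A‖)
    (hCA : 0 < ‖fromCols (1 : Matrix (Fin k) (Fin k) ℝ) (0 : Matrix (Fin k) (Fin m) ℝ) * A‖)
    [Nonempty (Fin k)]
    {t : ℝ} (hUt : IsUnit (stmt11U k m A Y₀ t))
    {s : ℝ} (hs0 : 0 ≤ s) (hsD : s ≤ stmt11Delta k m A Y₀ W t) :
    IsUnit (stmt11U k m A Y₀ (t + s)) := by
  classical
  set C : Matrix (Fin k) (Fin k ⊕ Fin m) ℝ := fromCols 1 0 with hCdef
  set R₀ : Matrix (Fin k ⊕ Fin m) (Fin k) ℝ := fromRows 1 Y₀ with hR0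
  set Yt := stmt11Y k m A Y₀ t with hYt
  set R : Matrix (Fin k ⊕ Fin m) (Fin k) ℝ := fromRows 1 Yt with hRdef
  set Ut := stmt11U k m A Y₀ t with hUtdef
  have hdet : IsUnit Ut.det := (Matrix.isUnit_iff_isUnit_det _).mp hUt
  have hYU : Yt * Ut = toRows₂ (NormedSpace.exp (t • A) * R₀) := by
    rw [hYt, stmt11Y, Matrix.mul_assoc, ← hUtdef, Matrix.nonsing_inv_mul _ hdet,
      Matrix.mul_one]
  have hM : R * Ut = NormedSpace.exp (t • A) * R₀ := by
    rw [hRdef, fromRows_mul, Matrix.one_mul, hYU]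
    rw [show Ut = toRows₁ (NormedSpace.exp (t • A) * R₀) from rfl]
    exact fromRows_toRows _
  have hexp : NormedSpace.exp ((t + s) • A)
      = NormedSpace.exp (s • A) * NormedSpace.exp (t • A) := by
    rw [show (t + s) • A = s • A + t • A by rw [add_smul, add_comm]]
    exact Matrix.exp_add_of_commute _ _ (((Commute.refl A).smul_left s).smul_right t)
  have hUsplit : stmt11U k m A Y₀ (t + s)
      = (C * NormedSpace.exp (s • A) * R) * Ut := by
    calc stmt11U k m A Y₀ (t + s)
        = C * (NormedSpace.exp ((t + s) • A) * R₀) := (st11_C_mul _).symm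
      _ = C * (NormedSpace.exp (s • A) * (NormedSpace.exp (t • A) * R₀)) := by
          rw [hexp, Matrix.mul_assoc]
      _ = C * (NormedSpace.exp (s • A) * (R * Ut)) := by rw [hM]
      _ = (C * NormedSpace.exp (s • A) * R) * Ut := by
          rw [← Matrix.mul_assoc, ← Matrix.mul_assoc]
  rw [hUsplit]
  refine IsUnit.mul ?_ hUt
  rcases eq_or_lt_of_le hs0 with hs | hs
  · rw [← hs]
    norm_num [NormedSpace.exp_zero, Matrix.mul_one]
    rw [st11_C_mul R, hRdef, toRows₁_fromRows]
    exact isUnit_one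
  · have hB : C * NormedSpace.exp (s • A) * R
        = 1 + C * (NormedSpace.exp (s • A) - 1) * R := by
      rw [Matrix.mul_sub, Matrix.mul_one, Matrix.sub_mul, st11_C_mul R, hRdef,
        toRows₁_fromRows]
      abel
    have h2 := st11_key A hCA hs
    have hRpos : 0 < ‖R‖ := st11_R_pos Yt
    have h3 : ‖C * A‖ * s * Real.exp (s * ‖A‖) * ‖R‖ ≤ 1 := by
      set x : ℝ := ‖A‖ / (‖C * A‖ * ‖R‖) with hx
      have hx0 : 0 ≤ x := by positivity
      obtain ⟨hW0, hWeq⟩ := hW x (Set.mem_Ici.mpr hx0)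
      have hsA : s * ‖A‖ ≤ W x := by
        have hDelta : stmt11Delta k m A Y₀ W t = W x / ‖A‖ := rfl
        rw [hDelta] at hsD
        exact (le_div_iff₀ hApos).mp hsD
      have hmono : s * ‖A‖ * Real.exp (s * ‖A‖) ≤ W x * Real.exp (W x) :=
        mul_le_mul hsA (Real.exp_le_exp.mpr hsA) (Real.exp_pos _).le hW0
      rw [hWeq] at hmono
      have heq : ‖C * A‖ * s * Real.exp (s * ‖A‖) * ‖R‖
          = (s * ‖A‖ * Real.exp (s * ‖A‖)) * (‖C * A‖ * ‖R‖ / ‖A‖) := by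
        field_simp
      rw [heq]
      calc (s * ‖A‖ * Real.exp (s * ‖A‖)) * (‖C * A‖ * ‖R‖ / ‖A‖)
          ≤ x * (‖C * A‖ * ‖R‖ / ‖A‖) := by
            exact mul_le_mul_of_nonneg_right hmono (by positivity)
        _ = 1 := by rw [hx]; field_simp
    have hlt1 : ‖C * (NormedSpace.exp (s • A) - 1) * R‖ < 1 := by
      calc ‖C * (NormedSpace.exp (s • A) - 1) * R‖
          ≤ ‖C * (NormedSpace.exp (s • A) - 1)‖ * ‖R‖ := Matrix.l2_opNorm_mul _ _
        _ < (‖C * A‖ * s * Real.exp (s * ‖A‖)) * ‖R‖ :=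
            mul_lt_mul_of_pos_right h2 hRpos
        _ ≤ 1 := h3
    rw [hB]
    have := (Units.oneSub (-(C * (NormedSpace.exp (s • A) - 1) * R))
      (by rwa [norm_neg])).isUnit
    rwa [Units.val_oneSub, sub_neg_eq_add] at this

lemma st11_U0 {k m : ℕ} (A : Matrix (Fin k ⊕ Fin m) (Fin k ⊕ Fin m) ℝ)
    (Y₀ : Matrix (Fin m) (Fin k) ℝ) : stmt11U k m A Y₀ 0 = 1 := by
  rw [stmt11U, zero_smul, NormedSpace.exp_zero, Matrix.one_mul, toRows₁_fromRows]

lemma st11_U_cont {k m : ℕ} (A : Matrix (Fin k ⊕ Fin m) (Fin k ⊕ Fin m) ℝ)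
    (Y₀ : Matrix (Fin m) (Fin k) ℝ) :
    Continuous fun t : ℝ => NormedSpace.exp (t • A) * fromRows (1 : Matrix (Fin k) (Fin k) ℝ) Y₀ :=
  ((continuous_iff_continuousAt.2 fun x => (NormedSpace.exp_analytic (𝕂 := ℝ) x).continuousAt).comp (continuous_id.smul continuous_const)).matrix_mul
    continuous_const

lemma st11_U_cont' {k m : ℕ} (A : Matrix (Fin k ⊕ Fin m) (Fin k ⊕ Fin m) ℝ)
    (Y₀ : Matrix (Fin m) (Fin k) ℝ) : Continuous (stmt11U k m A Y₀) := by
  apply continuous_matrix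
  intro i j
  simp only [stmt11U, toRows₁_apply]
  exact (st11_U_cont A Y₀).matrix_elem _ _

lemma st11_CU_const {k m : ℕ} (A : Matrix (Fin k ⊕ Fin m) (Fin k ⊕ Fin m) ℝ)
    (Y₀ : Matrix (Fin m) (Fin k) ℝ)
    (h : fromCols (1 : Matrix (Fin k) (Fin k) ℝ) (0 : Matrix (Fin k) (Fin m) ℝ) * A = 0)
    (t : ℝ) : stmt11U k m A Y₀ t = 1 := by
  classical
  set C : Matrix (Fin k) (Fin k ⊕ Fin m) ℝ := fromCols 1 0 with hCdef
  set f : ℕ → Matrix (Fin k ⊕ Fin m) (Fin k ⊕ Fin m) ℝ :=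
    fun nn => ((Nat.factorial nn : ℝ))⁻¹ • (t • A) ^ nn with hf
  have hsum : HasSum f (NormedSpace.exp (t • A)) := by
    have h1 := NormedSpace.expSeries_summable' (𝕂 := ℝ) (t • A)
    rw [hf, NormedSpace.exp_eq_tsum ℝ]
    exact h1.hasSum
  have hCsum : HasSum (fun nn => C * f nn) (C * NormedSpace.exp (t • A)) := by
    let lmap : Matrix (Fin k ⊕ Fin m) (Fin k ⊕ Fin m) ℝ →ₗ[ℝ] Matrix (Fin k) (Fin k ⊕ Fin m) ℝ :=
      { toFun := fun X => C * X
        map_add' := fun X Y => Matrix.mul_add C X Y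
        map_smul' := fun c X => (Matrix.mul_smul C c X) }
    have hc : Continuous ⇑lmap := continuous_const.matrix_mul continuous_id
    exact hsum.map lmap hc
  have hzero : ∀ nn : ℕ, nn ≠ 0 → C * f nn = 0 := by
    intro nn hnn
    obtain ⟨j, rfl⟩ := Nat.exists_eq_succ_of_ne_zero hnn
    simp only [hf]
    rw [Matrix.mul_smul, pow_succ', ← Matrix.mul_assoc, Matrix.mul_smul, h]
    simp
  have hsingle : HasSum (fun nn => C * f nn) (C * f 0) := hasSum_single 0 hzero
  have hCexp : C * NormedSpace.exp (t • A) = C := by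
    have := hCsum.unique hsingle
    rw [this]
    simp [hf]
  have : stmt11U k m A Y₀ t = C * NormedSpace.exp (t • A)
      * fromRows (1 : Matrix (Fin k) (Fin k) ℝ) Y₀ := by
    rw [Matrix.mul_assoc, st11_C_mul]
    rfl
  rw [this, hCexp, st11_C_mul, toRows₁_fromRows]

end Helpers

set_option maxHeartbeats 2000000 in
/-- Suppose the Riccati differential equation defined by `A ≠ 0` has finite escape time
from `Y₀`, i.e. the set `E` of positive times at which `U(t)` is singular is nonempty, so
that the escape time is `t_A(Y₀) = sInf E`.  Then the sequence `t₀ = 0`,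
`t_{n+1} = t_n + Δ(t_n)` is strictly increasing, bounded above by `t_A(Y₀)`, and converges
to `t_A(Y₀)`. -/
theorem stmt_11 (k m : ℕ) (A : Matrix (Fin k ⊕ Fin m) (Fin k ⊕ Fin m) ℝ) (hA : A ≠ 0)
    (Y₀ : Matrix (Fin m) (Fin k) ℝ)
    (W : ℝ → ℝ) (hW : ∀ y ∈ Set.Ici (0 : ℝ), 0 ≤ W y ∧ W y * Real.exp (W y) = y)
    (hfin : {t : ℝ | 0 < t ∧ ¬ IsUnit (stmt11U k m A Y₀ t)}.Nonempty)
    (seq : ℕ → ℝ) (hseq0 : seq 0 = 0)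
    (hseq : ∀ n : ℕ, seq (n + 1) = seq n + stmt11Delta k m A Y₀ W (seq n)) :
    StrictMono seq ∧
    (∀ n : ℕ, seq n ≤ sInf {t : ℝ | 0 < t ∧ ¬ IsUnit (stmt11U k m A Y₀ t)}) ∧
    Tendsto seq atTop (𝓝 (sInf {t : ℝ | 0 < t ∧ ¬ IsUnit (stmt11U k m A Y₀ t)})) := by
  classical
  set E := {t : ℝ | 0 < t ∧ ¬ IsUnit (stmt11U k m A Y₀ t)} with hE
  set T := sInf E with hTdef
  obtain ⟨t₀, ht₀⟩ := hfin
  have hk : Nonempty (Fin k) := by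
    rcases Nat.eq_zero_or_pos k with hk0 | hk0
    · exfalso
      subst hk0
      exact ht₀.2 ((Matrix.isUnit_iff_isUnit_det _).mpr
        (by rw [Matrix.det_isEmpty]; exact isUnit_one))
    · exact ⟨⟨0, hk0⟩⟩
  have hApos : 0 < ‖A‖ := norm_pos_iff.mpr hA
  have hCA : 0 < ‖fromCols (1 : Matrix (Fin k) (Fin k) ℝ) (0 : Matrix (Fin k) (Fin m) ℝ) * A‖ := by
    rw [norm_pos_iff]
    intro h
    rw [hE] at ht₀
    exact ht₀.2 (by rw [st11_CU_const A Y₀ h t₀]; exact isUnit_one)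
  have hUcont := st11_U_cont' A Y₀
  have hdetU0 : (stmt11U k m A Y₀ 0).det = 1 := by rw [st11_U0, Matrix.det_one]
  have hEeq : E = {t : ℝ | 0 ≤ t ∧ (stmt11U k m A Y₀ t).det = 0} := by
    ext t
    constructor
    · rintro ⟨h1, h2⟩
      refine ⟨h1.le, ?_⟩
      by_contra h3
      exact h2 ((Matrix.isUnit_iff_isUnit_det _).mpr (isUnit_iff_ne_zero.mpr h3))
    · rintro ⟨h1, h2⟩
      have ht0 : t ≠ 0 := by
        rintro rfl
        rw [hdetU0] at h2
        exact one_ne_zero h2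
      refine ⟨lt_of_le_of_ne h1 (Ne.symm ht0), fun hu => ?_⟩
      have := (Matrix.isUnit_iff_isUnit_det _).mp hu
      rw [h2] at this
      exact this.ne_zero rfl
  have hEclosed : IsClosed E := by
    rw [hEeq]
    have h1 : IsClosed {t : ℝ | 0 ≤ t} := isClosed_Ici
    have h2 : IsClosed {t : ℝ | (stmt11U k m A Y₀ t).det = 0} :=
      isClosed_eq hUcont.matrix_det continuous_const
    exact h1.inter h2
  have hEbdd : BddBelow E := ⟨0, fun x hx => hx.1.le⟩
  have hTmem : T ∈ E := hEclosed.csInf_mem ⟨t₀, ht₀⟩ hEbdd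
  have hTpos : 0 < T := hTmem.1
  have hgood : ∀ u : ℝ, 0 ≤ u → u < T → IsUnit (stmt11U k m A Y₀ u) := by
    intro u hu0 huT
    by_contra h
    rcases eq_or_lt_of_le hu0 with h0 | h0
    · exact h ((Matrix.isUnit_iff_isUnit_det _).mpr
        (by rw [← h0, hdetU0]; exact isUnit_one))
    · exact absurd (csInf_le hEbdd ⟨h0, h⟩) (not_le.mpr huT)
  have hDpos : ∀ t : ℝ, 0 < stmt11Delta k m A Y₀ W t := by
    intro t
    set x : ℝ := ‖A‖ / (‖fromCols (1 : Matrix (Fin k) (Fin k) ℝ) (0 : Matrix (Fin k) (Fin m) ℝ) * A‖ *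
      ‖fromRows (1 : Matrix (Fin k) (Fin k) ℝ) (stmt11Y k m A Y₀ t)‖) with hx
    have hxpos : 0 < x := div_pos hApos (mul_pos hCA (st11_R_pos _))
    obtain ⟨hW0, hWeq⟩ := hW x (Set.mem_Ici.mpr hxpos.le)
    have hWpos : 0 < W x := by
      rcases eq_or_lt_of_le hW0 with hzz | hzz
      · exfalso
        rw [← hzz] at hWeq
        simp at hWeq
        rw [← hWeq] at hxpos
        exact lt_irrefl 0 hxpos
      · exact hzz
    exact div_pos hWpos hApos
  have hstepT : ∀ t : ℝ, 0 ≤ t → t < T → t + stmt11Delta k m A Y₀ W t < T := by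
    intro t ht0 htT
    by_contra hcon
    push_neg at hcon
    have hs0 : (0 : ℝ) ≤ T - t := by linarith
    have hsD : T - t ≤ stmt11Delta k m A Y₀ W t := by linarith
    have hstep := st11_step A Y₀ W hW hApos hCA (hgood t ht0 htT) hs0 hsD
    rw [show t + (T - t) = T by ring] at hstep
    exact hTmem.2 hstep
  have hinv : ∀ n : ℕ, 0 ≤ seq n ∧ seq n < T := by
    intro n
    induction n with
    | zero => rw [hseq0]; exact ⟨le_refl 0, hTpos⟩
    | succ j ih =>
        rw [hseq j]
        exact ⟨by linarith [hDpos (seq j), ih.1], hstepT (seq j) ih.1 ih.2⟩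
  have hmono : StrictMono seq :=
    strictMono_nat_of_lt_succ fun n => by rw [hseq n]; linarith [hDpos (seq n)]
  have hboundT : ∀ n, seq n ≤ T := fun n => (hinv n).2.le
  refine ⟨hmono, hboundT, ?_⟩
  have hbdd : BddAbove (Set.range seq) := ⟨T, by rintro x ⟨n, rfl⟩; exact hboundT n⟩
  set L := ⨆ n, seq n with hL
  have htend : Tendsto seq atTop (𝓝 L) := tendsto_atTop_ciSup hmono.monotone hbdd
  have hLT : L ≤ T := ciSup_le hboundT
  rcases eq_or_lt_of_le hLT with hfin2 | hLlt
  · rwa [hfin2] at htend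
  exfalso
  have hL0 : 0 ≤ L := by
    have h0 := le_ciSup hbdd 0
    rw [hseq0] at h0
    linarith
  have hULunit := hgood L hL0 hLlt
  have hdetL : (stmt11U k m A Y₀ L).det ≠ 0 :=
    isUnit_iff_ne_zero.mp ((Matrix.isUnit_iff_isUnit_det _).mp hULunit)
  -- continuity of t ↦ ‖[I; Y(t)]‖ at L
  have hinvcont : ContinuousAt (fun t => (stmt11U k m A Y₀ t)⁻¹) L := by
    have h1 : ContinuousAt Inv.inv (stmt11U k m A Y₀ L) := by
      apply continuousAt_matrix_inv
      exact NormedRing.inverse_continuousAt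
        ((isUnit_iff_ne_zero.mpr hdetL).unit : ℝˣ)
    exact h1.comp hUcont.continuousAt
  have hV : Continuous fun t : ℝ =>
      toRows₂ (NormedSpace.exp (t • A) * fromRows (1 : Matrix (Fin k) (Fin k) ℝ) Y₀) := by
    apply continuous_matrix
    intro i j
    simp only [toRows₂_apply]
    exact (st11_U_cont A Y₀).matrix_elem _ _
  have hmul2 : Continuous fun p : Matrix (Fin m) (Fin k) ℝ × Matrix (Fin k) (Fin k) ℝ =>
      p.1 * p.2 := continuous_fst.matrix_mul continuous_snd
  have hYcont : ContinuousAt (stmt11Y k m A Y₀) L :=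
    hmul2.continuousAt.comp (hV.continuousAt.prodMk hinvcont)
  have hRcont : ContinuousAt
      (fun t => fromRows (1 : Matrix (Fin k) (Fin k) ℝ) (stmt11Y k m A Y₀ t)) L := by
    have hsplit : ∀ Ymat : Matrix (Fin m) (Fin k) ℝ,
        fromRows (1 : Matrix (Fin k) (Fin k) ℝ) Ymat
          = fromRows (1 : Matrix (Fin k) (Fin k) ℝ) (0 : Matrix (Fin m) (Fin k) ℝ)
            + fromRows (0 : Matrix (Fin k) (Fin m) ℝ) (1 : Matrix (Fin m) (Fin m) ℝ) * Ymat := by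
      intro Ymat
      rw [fromRows_mul, Matrix.zero_mul, Matrix.one_mul]
      ext (i | i) j <;>
        simp [fromRows_apply_inl, fromRows_apply_inr]
    have hfun : (fun t => fromRows (1 : Matrix (Fin k) (Fin k) ℝ) (stmt11Y k m A Y₀ t))
        = fun t => fromRows (1 : Matrix (Fin k) (Fin k) ℝ) (0 : Matrix (Fin m) (Fin k) ℝ)
            + fromRows (0 : Matrix (Fin k) (Fin m) ℝ) (1 : Matrix (Fin m) (Fin m) ℝ)
              * stmt11Y k m A Y₀ t :=
      funext fun t => hsplit _
    rw [hfun]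
    exact continuousAt_const.add
      (((continuous_const.matrix_mul continuous_id).continuousAt).comp hYcont)
  have hnormR : ContinuousAt
      (fun t => ‖fromRows (1 : Matrix (Fin k) (Fin k) ℝ) (stmt11Y k m A Y₀ t)‖) L :=
    hRcont.norm
  set xf : ℝ → ℝ := fun t => ‖A‖ / (‖fromCols (1 : Matrix (Fin k) (Fin k) ℝ) (0 : Matrix (Fin k) (Fin m) ℝ) * A‖ *
    ‖fromRows (1 : Matrix (Fin k) (Fin k) ℝ) (stmt11Y k m A Y₀ t)‖) with hxf
  have hxf' : ∀ t : ℝ, xf t = ‖A‖ / (‖fromCols (1 : Matrix (Fin k) (Fin k) ℝ) (0 : Matrix (Fin k) (Fin m) ℝ) * A‖ *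
    ‖fromRows (1 : Matrix (Fin k) (Fin k) ℝ) (stmt11Y k m A Y₀ t)‖) := fun t => rfl
  have hxpos : ∀ t : ℝ, 0 < xf t := fun t => by
    rw [hxf' t]
    exact div_pos hApos (mul_pos hCA (st11_R_pos _))
  have hxL : 0 < xf L := hxpos L
  have hxcont : ContinuousAt xf L := by
    apply ContinuousAt.div continuousAt_const (continuousAt_const.mul hnormR)
    exact (mul_pos hCA (st11_R_pos _)).ne'
  have hxn : Tendsto (fun n => xf (seq n)) atTop (𝓝 (xf L)) :=
    (hxcont.tendsto).comp htend
  have hDelta_eq : ∀ t : ℝ, stmt11Delta k m A Y₀ W t = W (xf t) / ‖A‖ := fun t => rfl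
  have hDn : Tendsto (fun n => stmt11Delta k m A Y₀ W (seq n)) atTop (𝓝 0) := by
    have h1 : Tendsto (fun n => seq (n + 1)) atTop (𝓝 L) :=
      htend.comp (tendsto_add_atTop_nat 1)
    have h2 : Tendsto (fun n => seq (n + 1) - seq n) atTop (𝓝 (L - L)) := h1.sub htend
    rw [sub_self] at h2
    refine h2.congr fun n => ?_
    rw [hseq n]; ring
  have hWn : Tendsto (fun n => W (xf (seq n))) atTop (𝓝 0) := by
    have h1 := hDn.mul_const ‖A‖
    rw [zero_mul] at h1
    refine h1.congr fun n => ?_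
    rw [hDelta_eq, div_mul_cancel₀ _ (ne_of_gt hApos)]
  have hxzero : Tendsto (fun n => xf (seq n)) atTop (𝓝 0) := by
    have hxn0 : ∀ n, 0 ≤ xf (seq n) := fun n => (hxpos (seq n)).le
    have heq : ∀ n, W (xf (seq n)) * Real.exp (W (xf (seq n))) = xf (seq n) :=
      fun n => (hW _ (Set.mem_Ici.mpr (hxn0 n))).2
    have hexp : Tendsto (fun n => Real.exp (W (xf (seq n)))) atTop (𝓝 (Real.exp 0)) :=
      (Real.continuous_exp.tendsto 0).comp hWn
    have hprod := hWn.mul hexp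
    rw [zero_mul] at hprod
    exact hprod.congr heq
  have hfinal := tendsto_nhds_unique hxn hxzero
  rw [hfinal] at hxL
  exact lt_irrefl 0 hxL
end
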